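/- arXiv:2210.13262 — 2 statements merged into one kernel-verified Lean document; each statement's English description precedes it below -/
import Mathlib

section
/- Let G be a simple graph on a finite vertex type V with finitely many edges, and let Δ be its symmetric digraph with arc type A = {(u,v) : G.Adj u v}, 𝔱(u,v) = u, 𝔥(u,v) = v, inv (u,v) = some (v,u). Let M^I be the A×A matrix over ℚ with M^I(a,a') = δ_{𝔥a,𝔱a'} − δ_{a⁻¹,a'}. Then in ℚ[[t]]: (1 − t²)^{|V|} · det(1 − t·M^I) = (1 − t²)^{|E|} · det(1 − t·A_G + t²·(D_G − 1)), where |E| is the number of edges of G, A_G is the adjacency matrix of G, D_G is the degree matrix of G, and 1 denotes the V×V identity matrix (the Bass–Ihara theorem for simple graphs). -/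
open PowerSeries Matrix Finset

noncomputable section

variable {V A R : Type*}

/-- Exponential of a formal power series over a ℚ-algebra (intended for series with zero
constant term): `exp f = ∑ₖ f^k / k!`; the coefficient of degree `n` only receives
contributions from `k ≤ n` when the constant term of `f` vanishes. -/
def pexp [CommRing R] [Algebra ℚ R] (f : PowerSeries R) : PowerSeries R :=
  PowerSeries.mk fun n => ∑ k ∈ Finset.range (n + 1),
    ((Nat.factorial k : ℚ))⁻¹ • (PowerSeries.coeff n (f ^ k))

/-- The generalized weight matrix `M(a,a') = τ(a')·δ_{𝔥a,𝔱a'} − υ(a')·δ_{a⁻¹,a'}`. -/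
def genWeight [CommRing R] [DecidableEq V] [DecidableEq A]
    (tl hd : A → V) (inv : A → Option A) (τ υ : A → R) : Matrix A A R :=
  fun a a' => τ a' * (if hd a = tl a' then 1 else 0) -
    (if inv a = some a' then υ a' else 0)

/-- The matrix `J(a,a') = υ(a')·δ_{a⁻¹,a'}`. -/
def invJ [CommRing R] [DecidableEq A] (inv : A → Option A) (υ : A → R) :
    Matrix A A R :=
  fun a a' => if inv a = some a' then υ a' else 0

/-- `c_a(t)`: `1 + υ(a)t` for loops, `1 − υ(a)υ(a⁻¹)t²` for non-loop arcs with inverse,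
`1` for arcs with no inverse. -/
def cFac [CommRing R] [DecidableEq V] (tl hd : A → V) (inv : A → Option A)
    (υ : A → R) (a : A) : PowerSeries R :=
  if tl a = hd a then 1 + PowerSeries.C (υ a) * X
  else
    match inv a with
    | some b => 1 - PowerSeries.C (υ a * υ b) * X ^ 2
    | none => 1

/-- The weighted adjacency matrix `A_Δ`. -/
def adjMat [CommRing R] [Fintype A] [DecidableEq V] (tl hd : A → V)
    (inv : A → Option A) (τ υ : A → R) : Matrix V V (PowerSeries R) :=
  fun u v => ∑ a : A, if tl a = u ∧ hd a = v then
    PowerSeries.C (τ a) * Ring.inverse (cFac tl hd inv υ a) else 0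

/-- The weighted backtrack matrix `B_Δ`. -/
def backMat [CommRing R] [Fintype A] [DecidableEq V] (tl hd : A → V)
    (inv : A → Option A) (τ υ : A → R) : Matrix V V (PowerSeries R) :=
  fun u v => if u = v then
    ∑ a : A, (if tl a = u ∧ tl a ≠ hd a then
      (match inv a with
       | some b => PowerSeries.C (τ a * υ b) * Ring.inverse (cFac tl hd inv υ a)
       | none => 0)
      else 0)
  else 0

/-- The sum `N_m` of the circular products over all closed paths of length `m`. -/
def circSum [CommRing R] [Fintype A] [DecidableEq A] [DecidableEq V]
    (tl hd : A → V) (M : Matrix A A R) (m : ℕ) [NeZero m] : R :=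
  ∑ f ∈ Finset.univ.filter (fun f : ZMod m → A => ∀ i, hd (f i) = tl (f (i + 1))),
    ∏ i, M (f i) (f (i + 1))

/-- `N_m` as a function of `m : ℕ` (junk value `0` at `m = 0`). -/
def Nfun [CommRing R] [Fintype A] [DecidableEq A] [DecidableEq V]
    (tl hd : A → V) (M : Matrix A A R) (m : ℕ) : R :=
  if h : m = 0 then 0 else
    haveI : NeZero m := ⟨h⟩
    circSum tl hd M m

/-- The generalized weighted zeta function `exp (∑_{m ≥ 1} (N_m / m) t^m)`. -/
def zetaFun [CommRing R] [Algebra ℚ R] (N : ℕ → R) : PowerSeries R :=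
  pexp (PowerSeries.mk fun m => if m = 0 then 0 else ((m : ℚ)⁻¹) • N m)

namespace BassIharaAux

variable {W : Type*} [Fintype W] [DecidableEq W] (G : SimpleGraph W) [DecidableRel G.Adj]

/-- The arc type of the symmetric digraph of `G`. -/
abbrev Arc := {p : W × W // G.Adj p.1 p.2}

/-- Arc inversion. -/
def sig : Arc G → Arc G := fun a => ⟨(a.1.2, a.1.1), G.adj_symm a.2⟩

@[simp] lemma sig_sig (a : Arc G) : sig G (sig G a) = a := Subtype.ext rfl

lemma sig_injective : Function.Injective (sig G) := fun a b h => by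
  have := congrArg (sig G) h; simpa using this

/-- Start incidence matrix. -/
def Smat : Matrix W (Arc G) (PowerSeries ℚ) := fun v a => if a.1.1 = v then 1 else 0

/-- End incidence matrix. -/
def Tmat : Matrix W (Arc G) (PowerSeries ℚ) := fun v a => if a.1.2 = v then 1 else 0

/-- Arc inversion matrix. -/
def Jmat : Matrix (Arc G) (Arc G) (PowerSeries ℚ) := fun a b => if b = sig G a then 1 else 0

lemma boole_mul {α : Type*} [MulZeroOneClass α] (p q : Prop) [Decidable p] [Decidable q] :
    (if p then (1 : α) else 0) * (if q then 1 else 0) = if p ∧ q then 1 else 0 := by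
  split_ifs with h1 h2 h3 <;> simp_all

lemma S_mul_Tt : Smat G * (Tmat G)ᵀ = (G.adjMatrix ℚ).map (PowerSeries.C (R := ℚ)) := by
  ext u v
  simp only [Matrix.mul_apply, Matrix.transpose_apply, Smat, Tmat, Matrix.map_apply,
    SimpleGraph.adjMatrix_apply, boole_mul]
  by_cases h : G.Adj u v
  · rw [Finset.sum_eq_single (⟨(u, v), h⟩ : Arc G)]
    · simp [h]
    · intro b _ hb
      have : ¬(b.1.1 = u ∧ b.1.2 = v) := by
        rintro ⟨h1, h2⟩
        exact hb (Subtype.ext (Prod.ext h1 h2))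
      simp [this]
    · simp
  · have : ∀ a : Arc G, ¬(a.1.1 = u ∧ a.1.2 = v) := by
      rintro a ⟨h1, h2⟩
      exact h (h1 ▸ h2 ▸ a.2)
    simp [this, h]

lemma card_from (u : W) :
    (Finset.univ.filter fun a : Arc G => a.1.1 = u).card = G.degree u := by
  rw [← SimpleGraph.card_neighborFinset_eq_degree]
  apply Finset.card_bij (fun a _ => a.1.2)
  · intro a ha
    simp only [Finset.mem_filter] at ha
    rw [SimpleGraph.mem_neighborFinset]
    exact ha.2 ▸ a.2
  · intro a ha b hb hab
    simp only [Finset.mem_filter] at ha hb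
    exact Subtype.ext (Prod.ext (ha.2.trans hb.2.symm) hab)
  · intro v hv
    rw [SimpleGraph.mem_neighborFinset] at hv
    exact ⟨⟨(u, v), hv⟩, by simp, rfl⟩

lemma card_to (u : W) :
    (Finset.univ.filter fun a : Arc G => a.1.2 = u).card = G.degree u := by
  rw [← card_from G u]
  apply Finset.card_bij (fun a _ => sig G a)
  · intro a ha
    simp only [Finset.mem_filter] at ha ⊢
    exact ⟨Finset.mem_univ _, ha.2⟩
  · intro a _ b _ hab
    exact sig_injective G hab
  · intro a ha
    simp only [Finset.mem_filter] at ha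
    exact ⟨sig G a, by simp [sig, ha.2], (sig_sig G a).symm⟩

lemma S_mul_St :
    Smat G * (Smat G)ᵀ =
      (Matrix.diagonal fun u => (G.degree u : ℚ)).map (PowerSeries.C (R := ℚ)) := by
  ext u v
  simp only [Matrix.mul_apply, Matrix.transpose_apply, Smat, Matrix.map_apply, boole_mul]
  by_cases h : u = v
  · subst h
    simp only [and_self, Finset.sum_boole, Matrix.diagonal_apply_eq, Finset.filter_univ_mem]
    rw [card_from G u]
    push_cast
    simp
  · rw [Matrix.diagonal_apply_ne _ h]
    have : ∀ a : Arc G, ¬(a.1.1 = u ∧ a.1.1 = v) := by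
      rintro a ⟨h1, h2⟩; exact h (h1 ▸ h2 ▸ rfl)
    simp [this]

lemma T_mul_Tt :
    Tmat G * (Tmat G)ᵀ =
      (Matrix.diagonal fun u => (G.degree u : ℚ)).map (PowerSeries.C (R := ℚ)) := by
  ext u v
  simp only [Matrix.mul_apply, Matrix.transpose_apply, Tmat, Matrix.map_apply, boole_mul]
  by_cases h : u = v
  · subst h
    simp only [and_self, Finset.sum_boole, Matrix.diagonal_apply_eq]
    rw [card_to G u]
    push_cast
    simp
  · rw [Matrix.diagonal_apply_ne _ h]
    have : ∀ a : Arc G, ¬(a.1.2 = u ∧ a.1.2 = v) := by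
      rintro a ⟨h1, h2⟩; exact h (h1 ▸ h2 ▸ rfl)
    simp [this]

lemma S_mul_J : Smat G * Jmat G = Tmat G := by
  ext v b
  simp only [Matrix.mul_apply, Smat, Jmat, Tmat]
  rw [Finset.sum_eq_single (sig G b)]
  · simp [sig]; congr
  · intro a _ ha
    have : b ≠ sig G a := by
      intro hb
      exact ha (by rw [hb, sig_sig])
    simp [this]
  · simp

lemma J_mul_J : Jmat G * Jmat G = 1 := by
  ext a b
  simp only [Matrix.mul_apply, Jmat, Matrix.one_apply]
  rw [Finset.sum_eq_single (sig G a)]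
  · simp [eq_comm]
  · intro c _ hc
    rw [if_neg hc, zero_mul]
  · simp

lemma Tt_mul_S :
    (Tmat G)ᵀ * Smat G = fun a b : Arc G => if a.1.2 = b.1.1 then 1 else 0 := by
  ext a b
  simp only [Matrix.mul_apply, Matrix.transpose_apply, Tmat, Smat]
  rw [Finset.sum_eq_single a.1.2]
  · simp [eq_comm]
  · intro v _ hv
    simp [Ne.symm hv]
  · simp

lemma det_one_add_X_smul_J (f : W → ℕ) (hf : Function.Injective f) :
    Matrix.det (1 + (PowerSeries.X : PowerSeries ℚ) • Jmat G) =
      ((1 : PowerSeries ℚ) - PowerSeries.X ^ 2) ^ G.edgeFinset.card := by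
  set DT := {a : Arc G // f a.1.1 < f a.1.2} with hDT
  have hne : ∀ d d' : DT, sig G d.1 ≠ d'.1 := by
    intro d d' h
    have h1 : d'.1.1.1 = d.1.1.2 := by rw [← h]; rfl
    have h2 : d'.1.1.2 = d.1.1.1 := by rw [← h]; rfl
    have := d'.2
    rw [h1, h2] at this
    exact absurd d.2 (lt_asymm this)
  let g : DT ⊕ DT → Arc G := Sum.elim (fun d => d.1) (fun d => sig G d.1)
  have hg : Function.Bijective g := by
    constructor
    · rintro (d | d) (d' | d') h <;> simp only [g, Sum.elim_inl, Sum.elim_inr] at h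
      · exact congrArg Sum.inl (Subtype.ext h)
      · exact absurd h.symm (hne d' d)
      · exact absurd h (hne d d')
      · exact congrArg Sum.inr (Subtype.ext (sig_injective G h))
    · intro a
      rcases lt_trichotomy (f a.1.1) (f a.1.2) with h | h | h
      · exact ⟨Sum.inl ⟨a, h⟩, rfl⟩
      · exact absurd (hf h) (G.ne_of_adj a.2)
      · exact ⟨Sum.inr ⟨sig G a, h⟩, sig_sig G a⟩
  let e : DT ⊕ DT ≃ Arc G := Equiv.ofBijective g hg
  rw [← Matrix.det_submatrix_equiv_self e (1 + (PowerSeries.X : PowerSeries ℚ) • Jmat G)]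
  have hblocks : (1 + (PowerSeries.X : PowerSeries ℚ) • Jmat G).submatrix e e =
      Matrix.fromBlocks 1 ((PowerSeries.X : PowerSeries ℚ) • 1)
        ((PowerSeries.X : PowerSeries ℚ) • 1) 1 := by
    have key : ∀ p q : Arc G, (1 + (PowerSeries.X : PowerSeries ℚ) • Jmat G) p q =
        (if p = q then 1 else 0) + PowerSeries.X * (if q = sig G p then 1 else 0) := by
      intro p q
      rw [Matrix.add_apply, Matrix.one_apply, Matrix.smul_apply, Jmat, smul_eq_mul]
    refine Matrix.ext fun i j => ?_
    rcases i with d | d <;> rcases j with d' | d'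
    · rw [Matrix.submatrix_apply, show e (Sum.inl d) = d.1 from rfl,
        show e (Sum.inl d') = d'.1 from rfl, key,
        if_neg (fun h : (d'.1 : Arc G) = sig G d.1 => hne d d' h.symm), mul_zero, add_zero,
        Matrix.fromBlocks_apply₁₁, Matrix.one_apply]
      exact if_congr Subtype.coe_inj rfl rfl
    · rw [Matrix.submatrix_apply, show e (Sum.inl d) = d.1 from rfl,
        show e (Sum.inr d') = sig G d'.1 from rfl, key,
        if_neg (fun h : (d.1 : Arc G) = sig G d'.1 => hne d' d h.symm), zero_add,
        Matrix.fromBlocks_apply₁₂, Matrix.smul_apply, Matrix.one_apply, smul_eq_mul]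
      exact congrArg (PowerSeries.X * ·)
        (if_congr ⟨fun h => (Subtype.ext (sig_injective G h)).symm, fun h => by rw [h]⟩ rfl rfl)
    · rw [Matrix.submatrix_apply, show e (Sum.inr d) = sig G d.1 from rfl,
        show e (Sum.inl d') = d'.1 from rfl, key,
        if_neg (hne d d'), sig_sig, zero_add,
        Matrix.fromBlocks_apply₂₁, Matrix.smul_apply, Matrix.one_apply, smul_eq_mul]
      exact congrArg (PowerSeries.X * ·)
        (if_congr ⟨fun h => (Subtype.ext h).symm, fun h => by rw [h]⟩ rfl rfl)
    · rw [Matrix.submatrix_apply, show e (Sum.inr d) = sig G d.1 from rfl,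
        show e (Sum.inr d') = sig G d'.1 from rfl, key, sig_sig,
        if_neg (hne d' d), mul_zero, add_zero,
        Matrix.fromBlocks_apply₂₂, Matrix.one_apply]
      exact if_congr ⟨fun h => Subtype.ext (sig_injective G h), fun h => by rw [h]⟩ rfl rfl
  rw [hblocks, Matrix.det_fromBlocks_one₁₁]
  have : (1 : Matrix DT DT (PowerSeries ℚ)) -
      ((PowerSeries.X : PowerSeries ℚ) • 1) * ((PowerSeries.X : PowerSeries ℚ) • 1) =
      ((1 : PowerSeries ℚ) - PowerSeries.X ^ 2) • 1 := by
    rw [Matrix.smul_mul, Matrix.mul_smul, mul_one, smul_smul, ← sq, sub_smul, one_smul]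
  rw [this, Matrix.det_smul, Matrix.det_one, mul_one]
  congr 1
  rw [SimpleGraph.edgeFinset_card]
  let φ : DT → G.edgeSet := fun d => ⟨s(d.1.1.1, d.1.1.2), d.1.2⟩
  have hφ : Function.Bijective φ := by
    constructor
    · intro d d' h
      have h2 : s(d.1.1.1, d.1.1.2) = s(d'.1.1.1, d'.1.1.2) := congrArg Subtype.val h
      rw [Sym2.eq_iff] at h2
      rcases h2 with ⟨h3, h4⟩ | ⟨h3, h4⟩
      · exact Subtype.ext (Subtype.ext (Prod.ext h3 h4))
      · exfalso
        have := d.2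
        rw [h3, h4] at this
        exact absurd d'.2 (lt_asymm this)
    · rintro ⟨ed, he⟩
      induction ed using Sym2.ind with
      | _ x y =>
        rw [SimpleGraph.mem_edgeSet] at he
        rcases lt_trichotomy (f x) (f y) with h | h | h
        · exact ⟨⟨⟨(x, y), he⟩, h⟩, rfl⟩
        · exact absurd (hf h) (G.ne_of_adj he)
        · exact ⟨⟨⟨(y, x), G.adj_symm he⟩, h⟩, Subtype.ext (Sym2.eq_swap)⟩
  exact Fintype.card_of_bijective hφ

end BassIharaAux

/-- Bass–Ihara theorem for simple graphs:
`(1 − t²)^{|V|} · det(1 − t·Mᴵ) = (1 − t²)^{|E|} · det(1 − t·A_G + t²·(D_G − 1))`. -/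
theorem bass_ihara
    [Fintype V] [DecidableEq V] (G : SimpleGraph V) [DecidableRel G.Adj] :
    ((1 : PowerSeries ℚ) - PowerSeries.X ^ 2) ^ (Fintype.card V) *
      Matrix.det (1 - (PowerSeries.X : PowerSeries ℚ) •
        (genWeight (fun a : {p : V × V // G.Adj p.1 p.2} => a.1.1) (fun a => a.1.2)
          (fun a => some ⟨(a.1.2, a.1.1), G.adj_symm a.2⟩)
          (fun _ => (1 : ℚ)) (fun _ => 1)).map (PowerSeries.C (R := ℚ))) =
    ((1 : PowerSeries ℚ) - PowerSeries.X ^ 2) ^ (G.edgeFinset.card) *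
      Matrix.det (1 - (PowerSeries.X : PowerSeries ℚ) •
          (G.adjMatrix ℚ).map (PowerSeries.C (R := ℚ))
        + ((PowerSeries.X : PowerSeries ℚ)) ^ 2 •
          ((Matrix.diagonal fun u => (G.degree u : ℚ)) - 1).map (PowerSeries.C (R := ℚ))) := by
  classical
  open BassIharaAux in
  set u : PowerSeries ℚ := 1 - PowerSeries.X ^ 2 with hu_def
  have hu : u * u⁻¹ = 1 := by
    apply PowerSeries.mul_inv_cancel
    simp [hu_def]
  have hu' : u⁻¹ * u = 1 := by rw [mul_comm]; exact hu
  set S := Smat G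
  set T := Tmat G
  set J := Jmat G
  set A' := (G.adjMatrix ℚ).map (PowerSeries.C (R := ℚ)) with hA'
  set D' := (Matrix.diagonal fun w => (G.degree w : ℚ)).map (PowerSeries.C (R := ℚ)) with hD'
  set x : PowerSeries ℚ := PowerSeries.X
  set Mw := (genWeight (fun a : {p : V × V // G.Adj p.1 p.2} => a.1.1) (fun a => a.1.2)
      (fun a => some ⟨(a.1.2, a.1.1), G.adj_symm a.2⟩)
      (fun _ => (1 : ℚ)) (fun _ => 1)).map (PowerSeries.C (R := ℚ)) with hMw
  -- Step A : 1 - x•Mw = (1 + x•J) - x•(Tᵀ*S)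
  have stepA : (1 : Matrix (Arc G) (Arc G) (PowerSeries ℚ)) - x • Mw =
      (1 + x • J) - x • (Tᵀ * S) := by
    refine Matrix.ext fun a b => ?_
    have hTS := congrFun (congrFun (Tt_mul_S G) a) b
    simp only [Matrix.sub_apply, Matrix.add_apply, Matrix.smul_apply, hMw, hTS,
      Matrix.map_apply, genWeight, Jmat, J, one_mul, Option.some_inj, map_sub,
      smul_eq_mul]
    have h1 : (PowerSeries.C (R := ℚ)) (if (a.1.2 : V) = b.1.1 then (1 : ℚ) else 0) =
        (if (a.1.2 : V) = b.1.1 then (1 : PowerSeries ℚ) else 0) := by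
      split_ifs <;> simp
    have h2 : (PowerSeries.C (R := ℚ))
        (if (⟨(a.1.2, a.1.1), G.adj_symm a.2⟩ : Arc G) = b then (1 : ℚ) else 0) =
        (if b = sig G a then (1 : PowerSeries ℚ) else 0) := by
      have : ((⟨(a.1.2, a.1.1), G.adj_symm a.2⟩ : Arc G) = b) ↔ (b = sig G a) := by
        rw [eq_comm]; rfl
      rw [if_congr this rfl rfl]
      split_ifs <;> simp
    rw [h1, h2, show (Tᵀ * S) a b = _ from hTS]
    ring
  have hJJ : J * J = 1 := J_mul_J G
  have hSJ : S * J = T := S_mul_J G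
  have hST : S * Tᵀ = A' := S_mul_Tt G
  have hTT : T * Tᵀ = D' := T_mul_Tt G
  -- inverse of 1 + x•J
  set Q : Matrix (Arc G) (Arc G) (PowerSeries ℚ) := u⁻¹ • (1 - x • J) with hQ
  have hPQ : (1 + x • J) * Q = 1 := by
    rw [hQ, Matrix.mul_smul]
    have hexp : (1 + x • J) * (1 - x • J) = u • 1 := by
      rw [Matrix.mul_sub, Matrix.mul_one, Matrix.add_mul, Matrix.one_mul, Matrix.mul_smul,
        Matrix.smul_mul, hJJ, smul_smul, ← sq, hu_def, sub_smul, one_smul]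
      abel
    rw [hexp, smul_smul, hu', one_smul]
  -- Step B : factor out (1 + x•J)
  have stepB : (1 + x • J) - x • (Tᵀ * S) =
      (1 + x • J) * (1 - (x • (Q * Tᵀ)) * S) := by
    have h2 : (1 + x • J) * ((x • (Q * Tᵀ)) * S) = x • (Tᵀ * S) := by
      rw [← Matrix.mul_assoc, Matrix.mul_smul, ← Matrix.mul_assoc, hPQ, Matrix.one_mul,
        Matrix.smul_mul]
    rw [Matrix.mul_sub, Matrix.mul_one, h2]
  -- S * (x•(Q*Tᵀ)) = (x*u⁻¹) • (A' - x•D')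
  have hSN : S * (x • (Q * Tᵀ)) = (x * u⁻¹) • (A' - x • D') := by
    have hSQ : S * Q = u⁻¹ • (S - x • T) := by
      rw [hQ, Matrix.mul_smul, Matrix.mul_sub, Matrix.mul_one, Matrix.mul_smul, hSJ]
    rw [Matrix.mul_smul, ← Matrix.mul_assoc, hSQ, Matrix.smul_mul, Matrix.sub_mul,
      Matrix.smul_mul, hST, hTT, smul_smul]
  -- the V×V determinant identity
  have hmap : ((Matrix.diagonal fun w => (G.degree w : ℚ)) - 1).map (PowerSeries.C (R := ℚ)) =
      D' - 1 := by
    rw [Matrix.map_sub _ (fun a b => map_sub _ a b), Matrix.map_one _ (map_zero _) (map_one _),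
      ← hD']
  have hVdet : u ^ (Fintype.card V) * Matrix.det (1 - S * (x • (Q * Tᵀ))) =
      Matrix.det (1 - x • A' + x ^ 2 •
        ((Matrix.diagonal fun w => (G.degree w : ℚ)) - 1).map (PowerSeries.C (R := ℚ))) := by
    rw [hSN, hmap]
    have h3 : u • ((1 : Matrix V V (PowerSeries ℚ)) - (x * u⁻¹) • (A' - x • D')) =
        1 - x • A' + x ^ 2 • (D' - 1) := by
      rw [smul_sub, smul_smul, ← mul_assoc, mul_comm u x, mul_assoc, hu, mul_one, hu_def]
      simp only [smul_sub, smul_smul, ← sq, sub_smul, one_smul]; abel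
    rw [← h3, Matrix.det_smul]
  have hdetJ := det_one_add_X_smul_J G (fun v => ((Fintype.equivFin V) v : ℕ))
    (fun a b h => (Fintype.equivFin V).injective (Fin.val_injective h))
  calc u ^ (Fintype.card V) * Matrix.det (1 - x • Mw)
      = u ^ (Fintype.card V) * (Matrix.det (1 + x • J) *
          Matrix.det (1 - (x • (Q * Tᵀ)) * S)) := by
        rw [stepA, stepB, Matrix.det_mul]
    _ = Matrix.det (1 + x • J) *
          (u ^ (Fintype.card V) * Matrix.det (1 - S * (x • (Q * Tᵀ)))) := by
        rw [Matrix.det_one_sub_mul_comm]; ring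
    _ = u ^ G.edgeFinset.card * Matrix.det (1 - x • A' + x ^ 2 •
          ((Matrix.diagonal fun w => (G.degree w : ℚ)) - 1).map (PowerSeries.C (R := ℚ))) := by
        rw [hVdet, hdetJ]
end
end

section
/- Let V, A, 𝔱, 𝔥, inv be a finite digraph with inverse assignment, and take τ = υ = 1 (constant functions to 1 ∈ ℚ), so that M^I(a,a') = δ_{𝔥a,𝔱a'} − δ_{a⁻¹,a'}. Then for every m ≥ 1, the sum N_m over all closed paths f of length m of the circular product Π_{i ∈ ZMod m} M^I(f i, f (i+1)) equals the number of reduced closed paths of length m, i.e. the number of functions f : ZMod m → A such that 𝔥(f i) = 𝔱(f (i+1)) and inv(f i) ≠ some (f (i+1)) for all i ∈ ZMod m. -/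
open PowerSeries Matrix Finset

noncomputable section

variable {V A R : Type*}

/-- for the Ihara weights `τ = υ = 1`, `N_m` counts the reduced closed
paths of length `m`. -/
theorem circSum_ihara_eq_card_reduced
    [Fintype V] [Fintype A] [DecidableEq V] [DecidableEq A]
    (tl hd : A → V) (inv : A → Option A)
    (hsym : ∀ a b, inv a = some b → inv b = some a ∧ tl b = hd a ∧ hd b = tl a)
    (hloop : ∀ a, tl a = hd a → inv a = some a)
    (hnonloop : ∀ a b, tl a ≠ hd a → inv a = some b → b ≠ a)
    (m : ℕ) [NeZero m] :
    circSum tl hd (genWeight tl hd inv (fun _ => (1 : ℚ)) (fun _ => 1)) m =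
      ((Finset.univ.filter (fun f : ZMod m → A =>
        ∀ i, hd (f i) = tl (f (i + 1)) ∧ inv (f i) ≠ some (f (i + 1)))).card : ℚ) := by
  classical
  unfold circSum
  have key : ∀ f ∈ Finset.univ.filter (fun f : ZMod m → A => ∀ i, hd (f i) = tl (f (i + 1))),
      (∏ i, (genWeight tl hd inv (fun _ => (1 : ℚ)) (fun _ => 1)) (f i) (f (i + 1))) =
        if (∀ i, inv (f i) ≠ some (f (i + 1))) then (1 : ℚ) else 0 := by
    intro f hf
    simp only [Finset.mem_filter] at hf
    by_cases hred : ∀ i, inv (f i) ≠ some (f (i + 1))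
    · rw [if_pos hred]
      apply Finset.prod_eq_one
      intro i _
      simp [genWeight, hf.2 i, hred i]
    · rw [if_neg hred]
      push_neg at hred
      obtain ⟨i, hi⟩ := hred
      apply Finset.prod_eq_zero (Finset.mem_univ i)
      simp [genWeight, hf.2 i, hi]
  rw [Finset.sum_congr rfl key]
  rw [Finset.sum_filter, Finset.card_filter]
  push_cast
  apply Finset.sum_congr rfl
  intro f _
  by_cases hc : ∀ i, hd (f i) = tl (f (i + 1))
  · by_cases hr : ∀ i, inv (f i) ≠ some (f (i + 1))
    · rw [if_pos hc, if_pos hr, if_pos (fun i => ⟨hc i, hr i⟩)]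
    · push_neg at hr
      obtain ⟨i, hi⟩ := hr
      rw [if_pos hc, if_neg, if_neg]
      · intro h; exact (h i).2 hi
      · intro h; exact h i hi
  · push_neg at hc
    obtain ⟨i, hi⟩ := hc
    rw [if_neg, if_neg]
    · intro h; exact hi (h i).1
    · intro h; exact hi (h i)
end
end
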